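/- Let d ≥ 4, S = ℂ[x,y,z], J = (x^{d-1}, y^{d-1}, z^{d-1}), R = S/J. The image of the multiplication map R^{d-3} → R^{2d-3} given by multiplication by the class of x^{d-2}y^2 has dimension exactly d-3, spanned by the classes of x^{d-2} y^{2+a} z^{d-3-a} for 0 ≤ a ≤ d-4. -/

import Mathlib

open MvPolynomial Module

namespace FermatAux

/-- Monomials with some exponent ≥ d-1 lie in the Fermat-type monomial ideal. -/
theorem monomial_mem_J (d : ℕ) (i : Fin 3) (m : Fin 3 →₀ ℕ) (c : ℂ) (h : d - 1 ≤ m i) :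
    (monomial m c : MvPolynomial (Fin 3) ℂ) ∈
      Ideal.span ({X 0 ^ (d - 1), X 1 ^ (d - 1), X 2 ^ (d - 1)} : Set (MvPolynomial (Fin 3) ℂ)) := by
  have hg : (X i ^ (d - 1) : MvPolynomial (Fin 3) ℂ) ∈
      ({X 0 ^ (d - 1), X 1 ^ (d - 1), X 2 ^ (d - 1)} : Set (MvPolynomial (Fin 3) ℂ)) := by
    fin_cases i <;> simp
  have key : (monomial m c : MvPolynomial (Fin 3) ℂ)
      = monomial (m - Finsupp.single i (d - 1)) c * X i ^ (d - 1) := by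
    rw [X_pow_eq_monomial, monomial_mul, mul_one]
    congr 1
    rw [tsub_add_cancel_of_le (Finsupp.single_le_iff.mpr h)]
  rw [key]
  exact Ideal.mul_mem_left _ _ (Ideal.subset_span hg)

/-- Coefficients of small monomials vanish on the ideal. -/
theorem coeff_eq_zero_of_mem_J (d : ℕ) (f : MvPolynomial (Fin 3) ℂ)
    (hf : f ∈ Ideal.span ({X 0 ^ (d - 1), X 1 ^ (d - 1), X 2 ^ (d - 1)} : Set (MvPolynomial (Fin 3) ℂ)))
    (m : Fin 3 →₀ ℕ) (hm : ∀ i, m i < d - 1) : coeff m f = 0 := by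
  have key : ∀ (i : Fin 3) (p : MvPolynomial (Fin 3) ℂ),
      coeff m (p * X i ^ (d - 1)) = 0 := by
    intro i p
    rw [X_pow_eq_monomial, coeff_mul_monomial', if_neg]
    intro hle
    exact absurd (Finsupp.single_le_iff.mp hle) (not_le.mpr (hm i))
  rw [show ({X 0 ^ (d - 1), X 1 ^ (d - 1), X 2 ^ (d - 1)} : Set (MvPolynomial (Fin 3) ℂ))
      = insert (X 0 ^ (d - 1)) (insert (X 1 ^ (d - 1)) {X 2 ^ (d - 1)}) from rfl] at hf
  rw [Ideal.span, Submodule.mem_span_insert] at hf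
  obtain ⟨a, y, hy, rfl⟩ := hf
  rw [Submodule.mem_span_insert] at hy
  obtain ⟨b, z, hz, rfl⟩ := hy
  rw [Submodule.mem_span_singleton] at hz
  obtain ⟨c, rfl⟩ := hz
  simp only [smul_eq_mul, coeff_add, key]
  ring

/-- The exponent vector of `x^{d-2} y^{2+a} z^{d-3-a}`. -/
noncomputable def mon (d a : ℕ) : Fin 3 →₀ ℕ :=
  Finsupp.single 0 (d - 2) + Finsupp.single 1 (2 + a) + Finsupp.single 2 (d - 3 - a)

theorem mon_apply0 (d a : ℕ) : mon d a 0 = d - 2 := by simp [mon, Finsupp.single_apply]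
theorem mon_apply1 (d a : ℕ) : mon d a 1 = 2 + a := by simp [mon, Finsupp.single_apply]
theorem mon_apply2 (d a : ℕ) : mon d a 2 = d - 3 - a := by simp [mon, Finsupp.single_apply]

theorem gen_eq (d a : ℕ) :
    (X 0 ^ (d - 2) * X 1 ^ (2 + a) * X 2 ^ (d - 3 - a) : MvPolynomial (Fin 3) ℂ)
      = monomial (mon d a) 1 := by
  simp [X_pow_eq_monomial, monomial_mul, mon, add_assoc]

theorem li (d : ℕ) (hd : 4 ≤ d) :
    LinearIndependent ℂ fun j : Fin (d - 3) =>
      Ideal.Quotient.mk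
        (Ideal.span ({X 0 ^ (d - 1), X 1 ^ (d - 1), X 2 ^ (d - 1)} : Set (MvPolynomial (Fin 3) ℂ)))
        (monomial (mon d j) 1) := by
  rw [linearIndependent_iff']
  intro s g hsum i hi
  have hmem : (∑ j ∈ s, g j • (monomial (mon d j) 1 : MvPolynomial (Fin 3) ℂ)) ∈
      Ideal.span ({X 0 ^ (d - 1), X 1 ^ (d - 1), X 2 ^ (d - 1)} : Set (MvPolynomial (Fin 3) ℂ)) := by
    rw [← Ideal.Quotient.eq_zero_iff_mem, map_sum]
    rw [← hsum]
    exact Finset.sum_congr rfl fun j _ => map_smul (Ideal.Quotient.mkₐ ℂ _) _ _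
  have hcoeff := coeff_eq_zero_of_mem_J d _ hmem (mon d i) ?_
  · rw [coeff_sum] at hcoeff
    simp only [coeff_smul, coeff_monomial] at hcoeff
    rw [Finset.sum_eq_single i] at hcoeff
    · simpa using hcoeff
    · intro j hj hji
      have : mon d (j : ℕ) ≠ mon d (i : ℕ) := by
        intro h
        exact hji (Fin.ext (by have := congrArg (fun f => f 1) h; simpa [mon_apply1] using this))
      simp [this]
    · intro h; exact absurd hi h
  · intro k
    fin_cases k <;> simp [mon_apply0, mon_apply1, mon_apply2] <;> omega

end FermatAux

open FermatAux in
/-- For the Jacobian ring `R` of the Fermat curve of degree `d ≥ 4`, the image of the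
multiplication map `R^{d-3} → R^{2d-3}` by the class `ξ = [x^{d-2} y^2]` is spanned by the
classes of `x^{d-2} y^{2+a} z^{d-3-a}` for `0 ≤ a ≤ d-4`, and has dimension exactly `d-3`. -/
theorem fermat_xi_rank (d : ℕ) (hd : 4 ≤ d) :
    let S := MvPolynomial (Fin 3) ℂ
    let J : Ideal S := Ideal.span {X 0 ^ (d - 1), X 1 ^ (d - 1), X 2 ^ (d - 1)}
    let mk := (Ideal.Quotient.mkₐ ℂ J).toLinearMap
    let ξ := Ideal.Quotient.mk J (X 0 ^ (d - 2) * X 1 ^ 2)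
    let im := Submodule.map (LinearMap.mulLeft ℂ ξ)
        (Submodule.map mk (homogeneousSubmodule (Fin 3) ℂ (d - 3)))
    im = Submodule.span ℂ
        ((fun a => Ideal.Quotient.mk J (X 0 ^ (d - 2) * X 1 ^ (2 + a) * X 2 ^ (d - 3 - a))) ''
          {a : ℕ | a ≤ d - 4}) ∧
      finrank ℂ im = d - 3 := by
  intro S J mk ξ im
  have hspan : im = Submodule.span ℂ
      ((fun a => Ideal.Quotient.mk J (X 0 ^ (d - 2) * X 1 ^ (2 + a) * X 2 ^ (d - 3 - a))) ''
        {a : ℕ | a ≤ d - 4}) := by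
    apply le_antisymm
    · rintro x ⟨y, ⟨p, hp, rfl⟩, rfl⟩
      rw [SetLike.mem_coe, mem_homogeneousSubmodule] at hp
      simp only [LinearMap.mulLeft_apply, AlgHom.toLinearMap_apply, Ideal.Quotient.mkₐ_eq_mk]
      rw [← p.support_sum_monomial_coeff, map_sum, Finset.mul_sum]
      apply Submodule.sum_mem
      intro m hm
      have hc : coeff m p ≠ 0 := mem_support_iff.mp hm
      have hdeg : m 0 + m 1 + m 2 = d - 3 := by
        have h1 := hp hc
        rw [Finsupp.weight_apply] at h1
        rw [← h1, Finsupp.sum]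
        rw [Finset.sum_subset (Finset.subset_univ m.support)
          (fun i _ hi => by simp [Finsupp.notMem_support_iff.mp hi])]
        simp [Fin.sum_univ_three]
      have hmul : ξ * Ideal.Quotient.mk J (monomial m (coeff m p))
          = Ideal.Quotient.mk J
            (monomial (Finsupp.single 0 (d - 2) + Finsupp.single 1 2 + m) (coeff m p)) := by
        rw [← map_mul]
        congr 1
        rw [show (X 0 ^ (d - 2) * X 1 ^ 2 : S) =
          monomial (Finsupp.single 0 (d - 2) + Finsupp.single 1 2) 1 by
            rw [X_pow_eq_monomial, X_pow_eq_monomial, monomial_mul, one_mul]]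
        rw [monomial_mul, one_mul]
      show ξ * Ideal.Quotient.mk J (monomial m (coeff m p)) ∈ _
      rw [hmul]
      by_cases h0 : m 0 = 0
      · by_cases h1 : m 1 ≤ d - 4
        · have hmeq : (Finsupp.single 0 (d - 2) + Finsupp.single 1 2 + m : Fin 3 →₀ ℕ)
              = mon d (m 1) := by
            ext j
            fin_cases j <;> simp [mon, Finsupp.single_apply, h0] <;> omega
          have hsm : (monomial (Finsupp.single 0 (d - 2) + Finsupp.single 1 2 + m)
              (coeff m p) : S) = (coeff m p) • monomial (mon d (m 1)) 1 := by
            rw [hmeq, smul_monomial, smul_eq_mul, mul_one]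
          have hms : Ideal.Quotient.mk J ((coeff m p) • (monomial (mon d (m 1)) 1 : S))
              = (coeff m p) • Ideal.Quotient.mk J (monomial (mon d (m 1)) 1) :=
            map_smul (Ideal.Quotient.mkₐ ℂ J) _ _
          rw [hsm, hms]
          apply Submodule.smul_mem
          apply Submodule.subset_span
          exact ⟨m 1, h1, congrArg (Ideal.Quotient.mk J) (gen_eq d (m 1))⟩
        · have : d - 1 ≤ (Finsupp.single 0 (d - 2) + Finsupp.single 1 2 + m : Fin 3 →₀ ℕ) 1 := by
            simp [Finsupp.single_apply]; omega
          rw [Ideal.Quotient.eq_zero_iff_mem.mpr (monomial_mem_J d 1 _ _ this)]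
          exact Submodule.zero_mem _
      · have : d - 1 ≤ (Finsupp.single 0 (d - 2) + Finsupp.single 1 2 + m : Fin 3 →₀ ℕ) 0 := by
          simp [Finsupp.single_apply]; omega
        rw [Ideal.Quotient.eq_zero_iff_mem.mpr (monomial_mem_J d 0 _ _ this)]
        exact Submodule.zero_mem _
    · rw [Submodule.span_le]
      rintro x ⟨a, ha, rfl⟩
      refine ⟨Ideal.Quotient.mk J (X 1 ^ a * X 2 ^ (d - 3 - a)), ⟨X 1 ^ a * X 2 ^ (d - 3 - a), ?_, rfl⟩, ?_⟩
      · rw [SetLike.mem_coe, mem_homogeneousSubmodule]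
        have := (isHomogeneous_X ℂ (1 : Fin 3)).pow a |>.mul
          ((isHomogeneous_X ℂ (2 : Fin 3)).pow (d - 3 - a))
        convert this using 1
        simp only [Set.mem_setOf_eq] at ha
        omega
      · simp only [LinearMap.mulLeft_apply]
        rw [← map_mul]
        congr 1
        rw [pow_add]
        ring
  refine ⟨hspan, ?_⟩
  have hrange : ((fun a => Ideal.Quotient.mk J (X 0 ^ (d - 2) * X 1 ^ (2 + a) * X 2 ^ (d - 3 - a))) ''
      {a : ℕ | a ≤ d - 4})
      = Set.range fun j : Fin (d - 3) => Ideal.Quotient.mk J (monomial (mon d j) 1) := by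
    ext x
    constructor
    · rintro ⟨a, ha, rfl⟩
      simp only [Set.mem_setOf_eq] at ha
      exact ⟨⟨a, by omega⟩, congrArg (Ideal.Quotient.mk J) (gen_eq d a).symm⟩
    · rintro ⟨j, rfl⟩
      exact ⟨j, by have := j.isLt; simp only [Set.mem_setOf_eq]; omega,
        congrArg (Ideal.Quotient.mk J) (gen_eq d j)⟩
  rw [hspan, hrange, finrank_span_eq_card (li d hd)]
  simp
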